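/- Let E be a real inner product space, let Δ : E → E and let g : E → ℝ be a convex function such that g has gradient Δ(x) at every point x ∈ E, with g(x) ≥ 0 for all x and g(0) = 0. Fix ρ ∈ (0,1], an integer j ≥ 1, and a sequence y : ℕ → E with zero-extension ȳ. Then for every T ∈ ℕ, ∑_{k=0}^{T} ρ^{-2k} ⟨Δ(y_k), y_k − ρ^{2j} ȳ_{k−j}⟩ ≥ ∑_{k=max(T−j+1,0)}^{T} ρ^{-2k} g(y_k), and in particular the right-hand side is nonnegative. -/

import Mathlib

open RealInnerProductSpace

/-- Gradient inequality for a convex function on `univ`. -/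
lemma grad_ineq_aux {E : Type*} [NormedAddCommGroup E] [InnerProductSpace ℝ E]
    (Δ : E → E) (g : E → ℝ)
    (hconv : ConvexOn ℝ Set.univ g)
    (hgrad : ∀ x : E, HasFDerivAt g (innerSL ℝ (Δ x)) x)
    (x z : E) : g x + ⟪Δ x, z - x⟫ ≤ g z := by
  set L : ℝ →ᵃ[ℝ] E := AffineMap.lineMap x z with hL
  have hLconv : ConvexOn ℝ (L ⁻¹' Set.univ) (g ∘ L) := hconv.comp_affineMap L
  have hpre : L ⁻¹' Set.univ = Set.univ := by simp
  rw [hpre] at hLconv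
  have hL0 : L 0 = x := by simp [hL]
  have hL1 : L 1 = z := by simp [hL]
  have hderivL : HasDerivAt (fun t : ℝ => L t) (z - x) 0 := by
    have : (fun t : ℝ => L t) = fun t : ℝ => t • (z - x) + x := by
      funext t; simp [hL, AffineMap.lineMap_apply, sub_smul, one_smul]
    rw [this]
    simpa using ((hasDerivAt_id (0 : ℝ)).smul_const (z - x)).add_const x
  have hD : HasDerivAt (g ∘ L) (⟪Δ x, z - x⟫) 0 := by
    have := (hgrad (L 0)).comp_hasDerivAt 0 hderivL
    rw [hL0] at this
    simpa using this
  have hslope := hLconv.le_slope_of_hasDerivAt (Set.mem_univ (0 : ℝ))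
    (Set.mem_univ (1 : ℝ)) one_pos hD
  have : slope (g ∘ L) 0 1 = g z - g x := by
    simp [slope_def_field, hL0, hL1]
  rw [this] at hslope
  linarith

/-- Key intermediate estimate in the proof of the off-by-`j` Zames–Falb ρ-IQC:
the weighted IQC partial sum dominates the tail sum `∑_{k=max(T−j+1,0)}^{T} ρ^{-2k} g(y_k)`
of the potential values, and that tail sum is nonnegative. (In `ℕ`-subtraction,
`Finset.Icc (T + 1 - j) T` is exactly `{max (T − j + 1, 0), …, T}`.) -/
theorem off_by_j_zames_falb_partial_sum_bound
    {E : Type*} [NormedAddCommGroup E] [InnerProductSpace ℝ E]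
    (Δ : E → E) (g : E → ℝ)
    (hconv : ConvexOn ℝ Set.univ g)
    (hgrad : ∀ x : E, HasFDerivAt g (innerSL ℝ (Δ x)) x)
    (hg_nonneg : ∀ x : E, 0 ≤ g x) (hg_zero : g 0 = 0)
    (ρ : ℝ) (hρ : ρ ∈ Set.Ioc (0 : ℝ) 1)
    (j : ℕ) (hj : 1 ≤ j)
    (y : ℕ → E) (ybar : ℤ → E)
    (hybar_nat : ∀ m : ℕ, ybar (m : ℤ) = y m)
    (hybar_neg : ∀ m : ℤ, m < 0 → ybar m = 0)
    (T : ℕ) :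
    (∑ k ∈ Finset.Icc (T + 1 - j) T, ρ ^ (-(2 * (k : ℤ))) * g (y k)) ≤
      (∑ k ∈ Finset.range (T + 1),
        ρ ^ (-(2 * (k : ℤ))) *
          ⟪Δ (y k), y k - ρ ^ (2 * j) • ybar ((k : ℤ) - (j : ℤ))⟫) ∧
    0 ≤ ∑ k ∈ Finset.Icc (T + 1 - j) T, ρ ^ (-(2 * (k : ℤ))) * g (y k) := by
  obtain ⟨hρ0, hρ1⟩ := hρ
  have hρne : ρ ≠ 0 := ne_of_gt hρ0
  set a : ℝ := ρ ^ (2 * j) with ha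
  have ha0 : 0 < a := pow_pos hρ0 _
  have ha1 : a ≤ 1 := pow_le_one₀ hρ0.le hρ1
  set W : ℤ → ℝ := fun m => ρ ^ (-(2 * m)) * g (ybar m) with hW
  -- pointwise bound
  have key : ∀ k : ℕ, W k - W ((k : ℤ) - j) ≤
      ρ ^ (-(2 * (k : ℤ))) * ⟪Δ (y k), y k - a • ybar ((k : ℤ) - j)⟫ := by
    intro k
    set v := ybar ((k : ℤ) - j) with hv
    have h1 : g (y k) - g (a • v) ≤ ⟪Δ (y k), y k - a • v⟫ := by
      have := grad_ineq_aux Δ g hconv hgrad (y k) (a • v)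
      have hneg : ⟪Δ (y k), y k - a • v⟫ = -⟪Δ (y k), a • v - y k⟫ := by
        rw [← inner_neg_right]; congr 1; abel
      rw [hneg]; linarith
    have h2 : g (a • v) ≤ a * g v := by
      have := hconv.2 (Set.mem_univ v) (Set.mem_univ (0 : E))
        ha0.le (by linarith : (0:ℝ) ≤ 1 - a) (by ring)
      simpa [smul_zero, hg_zero] using this
    have hz : (0:ℝ) < ρ ^ (-(2 * (k : ℤ))) := zpow_pos hρ0 _
    have hmul : ρ ^ (-(2 * (k : ℤ))) * (g (y k) - a * g v) ≤
        ρ ^ (-(2 * (k : ℤ))) * ⟪Δ (y k), y k - a • v⟫ :=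
      mul_le_mul_of_nonneg_left (by linarith) hz.le
    have hexp : ρ ^ (-(2 * ((k : ℤ) - j))) = ρ ^ (-(2 * (k : ℤ))) * a := by
      rw [ha, ← zpow_natCast ρ (2 * j), ← zpow_add₀ hρne]
      congr 1; push_cast; ring
    have hWk : W k = ρ ^ (-(2 * (k : ℤ))) * g (y k) := by
      rw [hW]; simp [hybar_nat k]
    have hWkj : W ((k : ℤ) - j) = ρ ^ (-(2 * (k : ℤ))) * (a * g v) := by
      show ρ ^ (-(2 * ((k : ℤ) - (j : ℤ)))) * g (ybar ((k : ℤ) - j)) = _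
      rw [hexp, hv]; ring
    rw [hWk, hWkj]
    calc ρ ^ (-(2 * (k : ℤ))) * g (y k) - ρ ^ (-(2 * (k : ℤ))) * (a * g v)
        = ρ ^ (-(2 * (k : ℤ))) * (g (y k) - a * g v) := by ring
      _ ≤ _ := hmul
  -- sum of differences
  have hsum1 : ∑ k ∈ Finset.range (T + 1), (W k - W ((k : ℤ) - j)) ≤
      ∑ k ∈ Finset.range (T + 1),
        ρ ^ (-(2 * (k : ℤ))) * ⟪Δ (y k), y k - a • ybar ((k : ℤ) - j)⟫ :=
    Finset.sum_le_sum fun k _ => key k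
  -- telescoping : left sum equals tail sum
  have hshift : ∑ k ∈ Finset.range (T + 1), W ((k : ℤ) - j)
      = ∑ m ∈ Finset.range (T + 1 - j), W m := by
    have hsub : Finset.Ico j (T + 1) ⊆ Finset.range (T + 1) := by
      intro k hk; simp only [Finset.mem_Ico] at hk; exact Finset.mem_range.2 hk.2
    rw [← Finset.sum_subset hsub]
    · rw [Finset.sum_Ico_eq_sum_range]
      apply Finset.sum_congr rfl
      intro i _
      congr 1
      push_cast; ring
    · intro k hk hk'
      simp only [Finset.mem_range] at hk
      simp only [Finset.mem_Ico, not_and, not_lt] at hk'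
      have hkj : (k : ℤ) - j < 0 := by
        have : k < j := by by_contra h; exact absurd (hk' (le_of_not_gt h)) (not_le.2 hk)
        omega
      simp [hW, hybar_neg _ hkj, hg_zero]
  have hsplit : ∑ k ∈ Finset.range (T + 1), W k
      = ∑ m ∈ Finset.range (T + 1 - j), W m + ∑ k ∈ Finset.Icc (T + 1 - j) T, W k := by
    rw [Finset.range_eq_Ico, Finset.range_eq_Ico, ← Finset.Ico_add_one_right_eq_Icc]
    exact (Finset.sum_Ico_consecutive (fun k : ℕ => W k) (Nat.zero_le _) (Nat.sub_le _ _)).symm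
  have htel : ∑ k ∈ Finset.range (T + 1), (W k - W ((k : ℤ) - j))
      = ∑ k ∈ Finset.Icc (T + 1 - j) T, W k := by
    rw [Finset.sum_sub_distrib, hshift, hsplit]; ring
  have hWnat : ∑ k ∈ Finset.Icc (T + 1 - j) T, W k
      = ∑ k ∈ Finset.Icc (T + 1 - j) T, ρ ^ (-(2 * (k : ℤ))) * g (y k) := by
    apply Finset.sum_congr rfl
    intro k _
    simp [hW, hybar_nat k]
  constructor
  · calc ∑ k ∈ Finset.Icc (T + 1 - j) T, ρ ^ (-(2 * (k : ℤ))) * g (y k)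
        = ∑ k ∈ Finset.range (T + 1), (W k - W ((k : ℤ) - j)) := by rw [htel, hWnat]
      _ ≤ _ := hsum1
  · exact Finset.sum_nonneg fun k _ =>
      mul_nonneg (zpow_pos hρ0 _).le (hg_nonneg _)
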